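/- arXiv:2511.06806 — 3 statements merged into one kernel-verified Lean document; each statement's English description precedes it below -/
import Mathlib

section
/- Let F be μ-strongly convex with L-Lipschitz gradient and minimizer x*. For the perturbed gradient step x⁺ = x - (1/L)(∇F(x) + e), one has F(x⁺) - F(x*) ≤ (1 - μ/L)(F(x) - F(x*)) + (1/(2L))‖e‖². -/
open RealInnerProductSpace

lemma descent_lemma {n : ℕ} (F : EuclideanSpace ℝ (Fin n) → ℝ)
    (g : EuclideanSpace ℝ (Fin n) → EuclideanSpace ℝ (Fin n)) (L : ℝ)
    (hgrad : ∀ x, HasGradientAt F (g x) x)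
    (hlip : ∀ x y, ‖g x - g y‖ ≤ L * ‖x - y‖)
    (x y : EuclideanSpace ℝ (Fin n)) :
    F y ≤ F x + ⟪g x, y - x⟫ + (L / 2) * ‖y - x‖ ^ 2 := by
  set d := y - x with hd
  have hφ : ∀ t : ℝ, HasDerivAt (fun t : ℝ => F (x + t • d)) ⟪g (x + t • d), d⟫ t := by
    intro t
    have hc : HasDerivAt (fun t : ℝ => x + t • d) d t := by
      simpa using ((hasDerivAt_id t).smul_const d).const_add x
    have hF : HasFDerivAt F ((InnerProductSpace.toDual ℝ _) (g (x + t • d))) (x + t • d) :=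
      hgrad (x + t • d)
    have := hF.comp_hasDerivAt t hc
    simp at this
    exact this
  set ψ : ℝ → ℝ := fun t => F (x + t • d) - t * ⟪g x, d⟫ - (L / 2) * t ^ 2 * ‖d‖ ^ 2 with hψ
  have hψ' : ∀ t : ℝ, HasDerivAt ψ (⟪g (x + t • d), d⟫ - ⟪g x, d⟫ - L * t * ‖d‖ ^ 2) t := by
    intro t
    have h1 : HasDerivAt (fun t : ℝ => t * ⟪g x, d⟫) ⟪g x, d⟫ t := by
      simpa using (hasDerivAt_id t).mul_const ⟪g x, d⟫
    have h2 : HasDerivAt (fun t : ℝ => (L / 2) * t ^ 2 * ‖d‖ ^ 2) (L * t * ‖d‖ ^ 2) t := by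
      have := ((hasDerivAt_pow 2 t).const_mul (L / 2)).mul_const (‖d‖ ^ 2)
      refine this.congr_deriv ?_
      ring
    exact ((hφ t).sub h1).sub h2
  have hanti : AntitoneOn ψ (Set.Icc (0:ℝ) 1) := by
    apply antitoneOn_of_deriv_nonpos (convex_Icc 0 1)
    · exact (Differentiable.continuous (fun t => (hψ' t).differentiableAt)).continuousOn
    · intro t _
      exact (hψ' t).differentiableAt.differentiableWithinAt
    · intro t ht
      rw [interior_Icc] at ht
      rw [(hψ' t).deriv]
      have h1 : ⟪g (x + t • d) - g x, d⟫ ≤ ‖g (x + t • d) - g x‖ * ‖d‖ := real_inner_le_norm _ _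
      have h2 : ‖g (x + t • d) - g x‖ ≤ L * (t * ‖d‖) := by
        have := hlip (x + t • d) x
        simpa [norm_smul, abs_of_nonneg ht.1.le, mul_assoc] using this
      have h3 : ⟪g (x + t • d), d⟫ - ⟪g x, d⟫ ≤ L * t * ‖d‖ ^ 2 := by
        have h4 := h1.trans (mul_le_mul_of_nonneg_right h2 (norm_nonneg d))
        rw [inner_sub_left] at h4
        nlinarith [h4]
      linarith
  have h01 := hanti (Set.mem_Icc.mpr ⟨le_refl 0, zero_le_one⟩) (Set.mem_Icc.mpr ⟨zero_le_one, le_refl 1⟩) zero_le_one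
  simp only [hψ, zero_smul, add_zero, one_smul] at h01
  have : x + d = y := by rw [hd]; abel
  rw [this] at h01
  nlinarith [h01]

/-- Contraction of the optimality gap under a perturbed gradient step:
`F x⁺ - F x* ≤ (1 - μ/L)(F x - F x*) + (1/(2L))‖e‖²`. -/
theorem perturbed_step_contraction {n : ℕ} (F : EuclideanSpace ℝ (Fin n) → ℝ)
    (g : EuclideanSpace ℝ (Fin n) → EuclideanSpace ℝ (Fin n)) (μ L : ℝ)
    (hμ : 0 < μ) (hμL : μ ≤ L)
    (hgrad : ∀ x, HasGradientAt F (g x) x)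
    (hsc : ∀ x y, F x ≥ F y + ⟪x - y, g y⟫ + (μ / 2) * ‖x - y‖ ^ 2)
    (hlip : ∀ x y, ‖g x - g y‖ ≤ L * ‖x - y‖)
    (xs : EuclideanSpace ℝ (Fin n)) (hmin : ∀ z, F xs ≤ F z)
    (x e : EuclideanSpace ℝ (Fin n)) :
    F (x - (1 / L) • (g x + e)) - F xs ≤
      (1 - μ / L) * (F x - F xs) + (1 / (2 * L)) * ‖e‖ ^ 2 := by
  have hL : (0:ℝ) < L := hμ.trans_le hμL
  -- PL inequality: F x - F xs ≤ ‖g x‖² / (2μ)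
  have hPL : 2 * μ * (F x - F xs) ≤ ‖g x‖ ^ 2 := by
    have h := hsc xs x
    have h1 : ⟪xs - x, g x⟫ ≥ -(‖xs - x‖ * ‖g x‖) := by
      have h' := real_inner_le_norm (-(xs - x)) (g x)
      rw [inner_neg_left, norm_neg] at h'
      linarith
    nlinarith [sq_nonneg (μ * ‖xs - x‖ - ‖g x‖), norm_nonneg (xs - x), norm_nonneg (g x), hμ, mul_le_mul_of_nonneg_left h1.le (le_of_lt hμ)]
  -- descent step
  set xp := x - (1 / L) • (g x + e) with hxp
  have hdesc := descent_lemma F g L hgrad hlip x xp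
  have hdiff : xp - x = -((1/L) • (g x + e)) := by rw [hxp]; abel
  have hinner : ⟪g x, xp - x⟫ = -(1/L) * (⟪g x, g x⟫ + ⟪g x, e⟫) := by
    rw [hdiff, inner_neg_right, inner_smul_right, inner_add_right]; ring
  have hnorm : ‖xp - x‖ ^ 2 = (1/L)^2 * (‖g x‖^2 + 2 * ⟪g x, e⟫ + ‖e‖^2) := by
    rw [hdiff, norm_neg, norm_smul]
    rw [mul_pow]
    have : ‖g x + e‖ ^ 2 = ‖g x‖^2 + 2 * ⟪g x, e⟫ + ‖e‖^2 := by
      rw [← real_inner_self_eq_norm_sq, ← real_inner_self_eq_norm_sq, ← real_inner_self_eq_norm_sq]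
      rw [inner_add_add_self, real_inner_comm e (g x)]
      ring
    rw [this]
    norm_num
  have hg2 : ⟪g x, g x⟫ = ‖g x‖ ^ 2 := real_inner_self_eq_norm_sq _
  -- combine
  have key : F xp ≤ F x - (1/(2*L)) * ‖g x‖^2 + (1/(2*L)) * ‖e‖^2 := by
    rw [hinner, hnorm, hg2] at hdesc
    have : F x + -(1 / L) * (‖g x‖ ^ 2 + ⟪g x, e⟫) + L / 2 * ((1 / L) ^ 2 * (‖g x‖ ^ 2 + 2 * ⟪g x, e⟫ + ‖e‖ ^ 2)) = F x - (1/(2*L)) * ‖g x‖^2 + (1/(2*L)) * ‖e‖^2 := by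
      field_simp
      ring
    linarith [hdesc, this.symm.le]
  have hgap : 0 ≤ F x - F xs := by linarith [hmin x]
  have hfin : (μ/L) * (F x - F xs) ≤ (1/(2*L)) * ‖g x‖^2 := by
    have h' : (1/(2*L)) * (2*μ*(F x - F xs)) ≤ (1/(2*L)) * ‖g x‖^2 :=
      mul_le_mul_of_nonneg_left hPL (by positivity)
    calc (μ/L)*(F x - F xs) = (1/(2*L))*(2*μ*(F x - F xs)) := by field_simp
      _ ≤ _ := h'
  have : (1 - μ/L) * (F x - F xs) = (F x - F xs) - (μ/L)*(F x - F xs) := by ring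
  linarith [key, hfin]
end

section
/- Suppose the per-sample gradients satisfy ‖∇f(x, ξ_m)‖² ≤ β₁ + β₂‖∇F(x)‖² for all m, where F is the average of f(·, ξ_m) over M_total samples. Let B ⊆ {1,…,M_total} be nonempty with cardinality |B|, and define the residual e = ((M_total - |B|)/(M_total·|B|))·Σ_{i∈B} ∇f(x,ξ_i) - (1/M_total)·Σ_{i∉B} ∇f(x,ξ_i). Then ‖e‖² ≤ 4((M_total - |B|)/M_total)²(β₁ + β₂‖∇F(x)‖²). -/
open Finset

/-- Bound on the mini-batch gradient residual:
`‖e‖² ≤ 4((M - |B|)/M)² (β₁ + β₂‖∇F x‖²)`. -/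
theorem residual_bound {n M : ℕ} (hM : 0 < M)
    (f : Fin M → EuclideanSpace ℝ (Fin n) → ℝ)
    (F : EuclideanSpace ℝ (Fin n) → ℝ)
    (hF : ∀ x, F x = (1 / (M : ℝ)) * ∑ m, f m x)
    (gf : Fin M → EuclideanSpace ℝ (Fin n) → EuclideanSpace ℝ (Fin n))
    (gF : EuclideanSpace ℝ (Fin n) → EuclideanSpace ℝ (Fin n))
    (hgf : ∀ m x, HasGradientAt (f m) (gf m x) x)
    (hgF : ∀ x, HasGradientAt F (gF x) x)
    (β₁ β₂ : ℝ) (hβ₁ : 0 ≤ β₁) (hβ₂ : 0 ≤ β₂)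
    (hbound : ∀ m x, ‖gf m x‖ ^ 2 ≤ β₁ + β₂ * ‖gF x‖ ^ 2)
    (B : Finset (Fin M)) (hB : B.Nonempty)
    (x : EuclideanSpace ℝ (Fin n)) :
    ‖(((M : ℝ) - B.card) / ((M : ℝ) * B.card)) • (∑ i ∈ B, gf i x)
        - ((M : ℝ))⁻¹ • (∑ i ∈ Bᶜ, gf i x)‖ ^ 2 ≤
      4 * (((M : ℝ) - B.card) / (M : ℝ)) ^ 2 * (β₁ + β₂ * ‖gF x‖ ^ 2) := by
  set G2 : ℝ := β₁ + β₂ * ‖gF x‖ ^ 2 with hG2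
  have hG2nn : 0 ≤ G2 := by positivity
  set G : ℝ := Real.sqrt G2 with hG
  have hGnn : 0 ≤ G := Real.sqrt_nonneg _
  have hGsq : G ^ 2 = G2 := Real.sq_sqrt hG2nn
  have hnorm : ∀ m, ‖gf m x‖ ≤ G := by
    intro m
    have := hbound m x
    have h1 : ‖gf m x‖ ^ 2 ≤ G ^ 2 := by rw [hGsq]; exact this
    nlinarith [norm_nonneg (gf m x), hGnn]
  have hk : (1 : ℝ) ≤ B.card := by
    exact_mod_cast hB.card_pos
  have hkM : (B.card : ℝ) ≤ M := by
    exact_mod_cast (card_le_card (subset_univ B)).trans_eq (Finset.card_fin M)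
  have hMpos : (0 : ℝ) < M := by exact_mod_cast hM
  have hkpos : (0 : ℝ) < B.card := by linarith
  have hsumB : ‖∑ i ∈ B, gf i x‖ ≤ B.card * G := by
    calc ‖∑ i ∈ B, gf i x‖ ≤ ∑ i ∈ B, ‖gf i x‖ := norm_sum_le _ _
      _ ≤ ∑ _i ∈ B, G := Finset.sum_le_sum fun i _ => hnorm i
      _ = B.card * G := by rw [Finset.sum_const, nsmul_eq_mul]
  have hcardC : (Bᶜ.card : ℝ) = M - B.card := by
    have : Bᶜ.card = M - B.card := by
      rw [Finset.card_compl, Fintype.card_fin]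
    rw [this, Nat.cast_sub (by exact_mod_cast hkM)]
  have hsumC : ‖∑ i ∈ Bᶜ, gf i x‖ ≤ ((M : ℝ) - B.card) * G := by
    calc ‖∑ i ∈ Bᶜ, gf i x‖ ≤ ∑ i ∈ Bᶜ, ‖gf i x‖ := norm_sum_le _ _
      _ ≤ ∑ _i ∈ Bᶜ, G := Finset.sum_le_sum fun i _ => hnorm i
      _ = ((M : ℝ) - B.card) * G := by rw [Finset.sum_const, nsmul_eq_mul, hcardC]
  have hMk : (0:ℝ) ≤ (M : ℝ) - B.card := by linarith
  have hnorme : ‖(((M : ℝ) - B.card) / ((M : ℝ) * B.card)) • (∑ i ∈ B, gf i x)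
      - ((M : ℝ))⁻¹ • (∑ i ∈ Bᶜ, gf i x)‖ ≤ 2 * (((M : ℝ) - B.card) / M) * G := by
    have h1 : ‖(((M : ℝ) - B.card) / ((M : ℝ) * B.card)) • (∑ i ∈ B, gf i x)‖
        ≤ (((M : ℝ) - B.card) / M) * G := by
      rw [norm_smul, Real.norm_eq_abs, abs_of_nonneg (by positivity)]
      calc (((M : ℝ) - B.card) / ((M : ℝ) * B.card)) * ‖∑ i ∈ B, gf i x‖
          ≤ (((M : ℝ) - B.card) / ((M : ℝ) * B.card)) * (B.card * G) := by
            apply mul_le_mul_of_nonneg_left hsumB (by positivity)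
        _ = (((M : ℝ) - B.card) / M) * G := by field_simp
    have h2 : ‖((M : ℝ))⁻¹ • (∑ i ∈ Bᶜ, gf i x)‖ ≤ (((M : ℝ) - B.card) / M) * G := by
      rw [norm_smul, Real.norm_eq_abs, abs_of_nonneg (by positivity)]
      calc ((M : ℝ))⁻¹ * ‖∑ i ∈ Bᶜ, gf i x‖
          ≤ ((M : ℝ))⁻¹ * (((M : ℝ) - B.card) * G) := by
            apply mul_le_mul_of_nonneg_left hsumC (by positivity)
        _ = (((M : ℝ) - B.card) / M) * G := by field_simp
    calc ‖_ - _‖ ≤ _ + _ := norm_sub_le _ _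
      _ ≤ (((M : ℝ) - B.card) / M) * G + (((M : ℝ) - B.card) / M) * G := add_le_add h1 h2
      _ = 2 * (((M : ℝ) - B.card) / M) * G := by ring
  have hrhs : (2 * (((M : ℝ) - B.card) / M) * G) ^ 2
      = 4 * (((M : ℝ) - B.card) / (M : ℝ)) ^ 2 * G2 := by
    rw [mul_pow, mul_pow, hGsq]; norm_num
  calc ‖_ - _‖ ^ 2 ≤ (2 * (((M : ℝ) - B.card) / M) * G) ^ 2 := by
        apply pow_le_pow_left₀ (norm_nonneg _) hnorme
    _ = 4 * (((M : ℝ) - B.card) / (M : ℝ)) ^ 2 * G2 := hrhs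
end

section
/- Let F be μ-strongly convex with L-Lipschitz gradient and minimizer x*. Consider iterates x_{i+1} = x_i - (1/L)(∇F(x_i) + e_i), where for each i the error satisfies ‖e_i‖² ≤ 4ρ²(β₁ + 2β₂L(F(x_i) - F(x*))) with ρ = (M_total - |B|)/M_total. Define Ψ = (1 - μ/L) + 4ρ²β₂ and assume Ψ ≠ 1. Then F(x_I) - F(x*) ≤ Ψ^I(F(x_0) - F(x*)) + 2ρ²(β₁/L)·(1 - Ψ^I)/(1 - Ψ). -/
set_option maxHeartbeats 800000


open RealInnerProductSpace

/-- Descent lemma: an `L`-Lipschitz gradient gives a quadratic upper bound. -/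
lemma descent_lemma_aux {n : ℕ} (F : EuclideanSpace ℝ (Fin n) → ℝ)
    (g : EuclideanSpace ℝ (Fin n) → EuclideanSpace ℝ (Fin n)) (L : ℝ) (hL : 0 < L)
    (hgrad : ∀ x, HasGradientAt F (g x) x)
    (hlip : ∀ x y, ‖g x - g y‖ ≤ L * ‖x - y‖) (a b : EuclideanSpace ℝ (Fin n)) :
    F b ≤ F a + ⟪b - a, g a⟫ + L / 2 * ‖b - a‖ ^ 2 := by
  set v := b - a with hv
  set φ : ℝ → ℝ := fun t => F (a + t • v) - t * ⟪v, g a⟫ - L / 2 * t ^ 2 * ‖v‖ ^ 2 with hφ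
  have hd : ∀ t : ℝ, HasDerivAt φ
      (⟪v, g (a + t • v)⟫ - ⟪v, g a⟫ - L * t * ‖v‖ ^ 2) t := by
    intro t
    have hc : HasDerivAt (fun t : ℝ => a + t • v) v t := by
      simpa using ((hasDerivAt_id t).smul_const v).const_add a
    have hF : HasFDerivAt F ((InnerProductSpace.toDual ℝ _) (g (a + t • v))) (a + t • v) :=
      hasGradientAt_iff_hasFDerivAt.mp (hgrad _)
    have h1 : HasDerivAt (fun t : ℝ => F (a + t • v)) (⟪v, g (a + t • v)⟫) t := by
      have h1' := hF.comp_hasDerivAt t hc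
      rw [InnerProductSpace.toDual_apply_apply, real_inner_comm] at h1'
      exact h1'
    have h2 : HasDerivAt (fun t : ℝ => t * ⟪v, g a⟫) (⟪v, g a⟫) t := by
      simpa using (hasDerivAt_id t).mul_const (⟪v, g a⟫ : ℝ)
    have h3 : HasDerivAt (fun t : ℝ => L / 2 * t ^ 2 * ‖v‖ ^ 2) (L * t * ‖v‖ ^ 2) t := by
      have := ((hasDerivAt_pow 2 t).const_mul (L / 2)).mul_const (‖v‖ ^ 2)
      exact this.congr_deriv (by simp only [Nat.cast_ofNat, Nat.add_one_sub_one, pow_one]; ring)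
    exact (h1.sub h2).sub h3
  have hmono : AntitoneOn φ (Set.Icc (0 : ℝ) 1) := by
    apply antitoneOn_of_deriv_nonpos (convex_Icc 0 1)
    · exact fun t _ => (hd t).differentiableAt.continuousAt.continuousWithinAt
    · exact fun t _ => (hd t).differentiableAt.differentiableWithinAt
    · intro t ht
      rw [interior_Icc] at ht
      rw [(hd t).deriv]
      have hb : ⟪v, g (a + t • v)⟫ - ⟪v, g a⟫ ≤ L * t * ‖v‖ ^ 2 := by
        have h1 : ⟪v, g (a + t • v)⟫ - ⟪v, g a⟫ = ⟪v, g (a + t • v) - g a⟫ := by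
          rw [inner_sub_right]
        have h2 : ⟪v, g (a + t • v) - g a⟫ ≤ ‖v‖ * ‖g (a + t • v) - g a‖ :=
          real_inner_le_norm _ _
        have h3 : ‖g (a + t • v) - g a‖ ≤ L * ‖(a + t • v) - a‖ := hlip _ _
        have h4 : ‖(a + t • v) - a‖ = t * ‖v‖ := by
          simp [norm_smul, abs_of_pos ht.1]
        rw [h4] at h3
        have h5 : ‖v‖ * ‖g (a + t • v) - g a‖ ≤ ‖v‖ * (L * (t * ‖v‖)) :=
          mul_le_mul_of_nonneg_left h3 (norm_nonneg v)
        calc ⟪v, g (a + t • v)⟫ - ⟪v, g a⟫ = ⟪v, g (a + t • v) - g a⟫ := h1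
          _ ≤ ‖v‖ * ‖g (a + t • v) - g a‖ := h2
          _ ≤ ‖v‖ * (L * (t * ‖v‖)) := h5
          _ = L * t * ‖v‖ ^ 2 := by ring
      linarith
  have h01 : φ 1 ≤ φ 0 := hmono (Set.mem_Icc.2 ⟨le_refl 0, zero_le_one⟩)
    (Set.mem_Icc.2 ⟨zero_le_one, le_refl 1⟩) zero_le_one
  have e0 : φ 0 = F a := by simp [hφ]
  have e1 : φ 1 = F b - ⟪v, g a⟫ - L / 2 * ‖v‖ ^ 2 := by
    simp [hφ, hv]
  rw [e0, e1] at h01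
  linarith

/-- Ergodic convergence bound of Theorem 1: with perturbed gradient iterates and
error bound `‖e_i‖² ≤ 4ρ²(β₁ + 2β₂L(F x_i - F x*))`, one has
`F x_I - F x* ≤ Ψ^I (F x_0 - F x*) + 2ρ²(β₁/L)(1 - Ψ^I)/(1 - Ψ)`. -/
theorem ergodic_convergence_bound {n : ℕ} (F : EuclideanSpace ℝ (Fin n) → ℝ)
    (g : EuclideanSpace ℝ (Fin n) → EuclideanSpace ℝ (Fin n)) (μ L : ℝ)
    (hμ : 0 < μ) (hμL : μ ≤ L)
    (hgrad : ∀ x, HasGradientAt F (g x) x)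
    (hsc : ∀ x y, F x ≥ F y + ⟪x - y, g y⟫ + (μ / 2) * ‖x - y‖ ^ 2)
    (hlip : ∀ x y, ‖g x - g y‖ ≤ L * ‖x - y‖)
    (xs : EuclideanSpace ℝ (Fin n)) (hmin : ∀ z, F xs ≤ F z)
    (Mtot Bcard : ℕ) (hMtot : 0 < Mtot) (hBle : Bcard ≤ Mtot)
    (β₁ β₂ : ℝ) (hβ₁ : 0 ≤ β₁) (hβ₂ : 0 ≤ β₂)
    (ρ : ℝ) (hρ : ρ = ((Mtot : ℝ) - Bcard) / Mtot)
    (x : ℕ → EuclideanSpace ℝ (Fin n)) (e : ℕ → EuclideanSpace ℝ (Fin n))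
    (hiter : ∀ i, x (i + 1) = x i - (1 / L) • (g (x i) + e i))
    (herr : ∀ i, ‖e i‖ ^ 2 ≤ 4 * ρ ^ 2 * (β₁ + 2 * β₂ * L * (F (x i) - F xs)))
    (Ψ : ℝ) (hΨ : Ψ = (1 - μ / L) + 4 * ρ ^ 2 * β₂) (hΨ1 : Ψ ≠ 1) :
    ∀ I : ℕ, F (x I) - F xs ≤
      Ψ ^ I * (F (x 0) - F xs) + 2 * ρ ^ 2 * (β₁ / L) * (1 - Ψ ^ I) / (1 - Ψ) := by
  have hL : 0 < L := lt_of_lt_of_le hμ hμL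
  have hρ0 : 0 ≤ ρ := by
    rw [hρ]
    apply div_nonneg (sub_nonneg.2 (Nat.cast_le.2 hBle)) (Nat.cast_pos.2 hMtot).le
  have hΔ : ∀ i, 0 ≤ F (x i) - F xs := fun i => sub_nonneg.2 (hmin _)
  have hΨ0 : 0 ≤ Ψ := by
    have h1 : μ / L ≤ 1 := (div_le_one hL).2 hμL
    nlinarith [mul_nonneg (sq_nonneg ρ) hβ₂]
  -- Polyak–Łojasiewicz inequality
  have hPL : ∀ z, 2 * μ * (F z - F xs) ≤ ‖g z‖ ^ 2 := by
    intro z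
    have h := hsc xs z
    have hip : -(‖xs - z‖ * ‖g z‖) ≤ ⟪xs - z, g z⟫ :=
      (abs_le.1 (abs_real_inner_le_norm _ _)).1
    nlinarith [sq_nonneg (‖g z‖ - μ * ‖xs - z‖), hmin z]
  -- one-step recursion
  have step : ∀ i, F (x (i + 1)) - F xs ≤ Ψ * (F (x i) - F xs) + 2 * ρ ^ 2 * (β₁ / L) := by
    intro i
    have hdes := descent_lemma_aux F g L hL hgrad hlip (x i) (x (i + 1))
    have hxd : x (i + 1) - x i = -((1 / L) • (g (x i) + e i)) := by
      rw [hiter i, sub_sub_cancel_left]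
    rw [hxd, inner_neg_left, real_inner_smul_left, inner_add_left, norm_neg, norm_smul] at hdes
    have hns : ‖g (x i) + e i‖ ^ 2 = ‖g (x i)‖ ^ 2 + 2 * ⟪g (x i), e i⟫ + ‖e i‖ ^ 2 := by
      have := norm_add_sq_real (g (x i)) (e i)
      linarith
    have hgg : ⟪g (x i), g (x i)⟫ = ‖g (x i)‖ ^ 2 := real_inner_self_eq_norm_sq _
    have hcomm : ⟪e i, g (x i)⟫ = ⟪g (x i), e i⟫ := real_inner_comm _ _
    have habs : ‖(1 / L : ℝ)‖ = 1 / L := by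
      rw [Real.norm_eq_abs, abs_of_pos (by positivity)]
    rw [habs, hcomm, hgg] at hdes
    have hkey : F (x (i + 1)) ≤ F (x i) - 1 / (2 * L) * ‖g (x i)‖ ^ 2
        + 1 / (2 * L) * ‖e i‖ ^ 2 := by
      have hLne : L ≠ 0 := ne_of_gt hL
      have hexp : (1 / L * ‖g (x i) + e i‖) ^ 2 = (1 / L) ^ 2 * ‖g (x i) + e i‖ ^ 2 := by ring
      rw [hexp, hns] at hdes
      have : F (x (i + 1)) ≤ F (x i) + (-(1 / L * (‖g (x i)‖ ^ 2 + ⟪g (x i), e i⟫)))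
          + L / 2 * ((1 / L) ^ 2 * (‖g (x i)‖ ^ 2 + 2 * ⟪g (x i), e i⟫ + ‖e i‖ ^ 2)) := hdes
      have hc : F (x i) + (-(1 / L * (‖g (x i)‖ ^ 2 + ⟪g (x i), e i⟫)))
          + L / 2 * ((1 / L) ^ 2 * (‖g (x i)‖ ^ 2 + 2 * ⟪g (x i), e i⟫ + ‖e i‖ ^ 2))
          = F (x i) - 1 / (2 * L) * ‖g (x i)‖ ^ 2 + 1 / (2 * L) * ‖e i‖ ^ 2 := by
        field_simp
        ring
      rw [hc] at this
      exact this
    have hpl := hPL (x i)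
    have he := herr i
    have hLinv : 0 < 1 / (2 * L) := by positivity
    have h1 : 1 / (2 * L) * ‖e i‖ ^ 2 ≤ 1 / (2 * L) * (4 * ρ ^ 2 * (β₁ + 2 * β₂ * L * (F (x i) - F xs))) :=
      mul_le_mul_of_nonneg_left he hLinv.le
    have h2 : -(1 / (2 * L) * ‖g (x i)‖ ^ 2) ≤ -(1 / (2 * L) * (2 * μ * (F (x i) - F xs))) := by
      have := mul_le_mul_of_nonneg_left hpl hLinv.le
      linarith
    have hc2 : 1 / (2 * L) * (4 * ρ ^ 2 * (β₁ + 2 * β₂ * L * (F (x i) - F xs)))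
        = 2 * ρ ^ 2 * (β₁ / L) + 4 * ρ ^ 2 * β₂ * (F (x i) - F xs) := by
      field_simp
      ring
    have hc3 : 1 / (2 * L) * (2 * μ * (F (x i) - F xs)) = μ / L * (F (x i) - F xs) := by
      field_simp
    rw [hΨ]
    linarith [hkey, h1, h2, hc2.le, hc2.ge, hc3.le, hc3.ge]
  intro I
  have main : F (x I) - F xs ≤ Ψ ^ I * (F (x 0) - F xs)
      + 2 * ρ ^ 2 * (β₁ / L) * ∑ k ∈ Finset.range I, Ψ ^ k := by
    induction I with
    | zero => simp
    | succ I ih =>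
      have h1 := step I
      have h2 := mul_le_mul_of_nonneg_left ih hΨ0
      calc F (x (I + 1)) - F xs ≤ Ψ * (F (x I) - F xs) + 2 * ρ ^ 2 * (β₁ / L) := h1
        _ ≤ Ψ * (Ψ ^ I * (F (x 0) - F xs) + 2 * ρ ^ 2 * (β₁ / L) * ∑ k ∈ Finset.range I, Ψ ^ k)
            + 2 * ρ ^ 2 * (β₁ / L) := by linarith
        _ = Ψ ^ (I + 1) * (F (x 0) - F xs)
            + 2 * ρ ^ 2 * (β₁ / L) * ∑ k ∈ Finset.range (I + 1), Ψ ^ k := by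
          rw [geom_sum_succ]
          ring
  have hgeo : (∑ k ∈ Finset.range I, Ψ ^ k) = (1 - Ψ ^ I) / (1 - Ψ) := by
    rw [geom_sum_eq hΨ1]
    rw [div_eq_div_iff (sub_ne_zero.2 hΨ1) (sub_ne_zero.2 (Ne.symm hΨ1))]
    ring
  rw [hgeo] at main
  calc F (x I) - F xs ≤ Ψ ^ I * (F (x 0) - F xs) + 2 * ρ ^ 2 * (β₁ / L) * ((1 - Ψ ^ I) / (1 - Ψ)) := main
    _ = Ψ ^ I * (F (x 0) - F xs) + 2 * ρ ^ 2 * (β₁ / L) * (1 - Ψ ^ I) / (1 - Ψ) := by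
      ring
end
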